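/- Let S ∈ ℚ⟦X⟧ be the power series with coeff n S = 1/(n+1)! for n even and coeff n S = 0 for n odd, and let G ∈ ℚ⟦X⟧ satisfy constantCoeff G = 1 and G² · (1 + X²) = 1. Then for every q ∈ ℕ, coeff q ( ((rescale (1/2) S)⁻¹)^{q+1} ) = (1/2)^q · coeff q G. -/

import Mathlib

open PowerSeries

/-- Let `S ∈ ℚ⟦X⟧` be the Taylor series of `sinh(u)/u`
(`coeff n S = 1/(n+1)!` for even `n`, `0` for odd `n`) and `G ∈ ℚ⟦X⟧` the Taylor
series of `1/√(1+u²)`. Then for every `q`,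
`coeff q (((rescale (1/2) S)⁻¹)^(q+1)) = (1/2)^q * coeff q G`. -/
theorem coeff_pow_inv_rescale_sinh_div (S G : PowerSeries ℚ)
    (hS : ∀ n : ℕ, coeff n S =
      if Even n then ((Nat.factorial (n + 1) : ℚ))⁻¹ else 0)
    (hG0 : constantCoeff G = 1) (hG : G ^ 2 * (1 + X ^ 2) = 1) :
    ∀ q : ℕ,
      coeff q (((rescale (1 / 2 : ℚ) S)⁻¹) ^ (q + 1))
        = (1 / 2 : ℚ) ^ q * coeff q G := by
  set Q : PowerSeries ℚ := rescale (1 / 2 : ℚ) S with hQdef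
  have hQc : ∀ n : ℕ, coeff n Q
      = (1/2 : ℚ)^n * (if Even n then ((Nat.factorial (n + 1) : ℚ))⁻¹ else 0) := by
    intro n; rw [hQdef, coeff_rescale, hS n]
  have hQ0 : constantCoeff Q = 1 := by
    rw [← coeff_zero_eq_constantCoeff_apply]
    simpa using hQc 0
  set P : PowerSeries ℚ := Q⁻¹ with hPdef
  have hQP : Q * P = 1 := by
    rw [hPdef]; exact PowerSeries.mul_inv_cancel Q (by rw [hQ0]; norm_num)
  set f : PowerSeries ℚ := X * Q with hfdef
  have hPf : P * f = X := by rw [hfdef]; linear_combination X * hQP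
  have hcf : ∀ n : ℕ, coeff (n+1) f
      = (1/2 : ℚ)^n * (if Even n then ((Nat.factorial (n + 1) : ℚ))⁻¹ else 0) := by
    intro n; rw [hfdef, coeff_succ_X_mul]; exact hQc n
  have hf0 : constantCoeff f = 0 := by rw [hfdef]; simp
  have hf'' : d⁄dX ℚ (d⁄dX ℚ f) = C (1/4) * f := by
    ext n
    rw [coeff_derivative, coeff_derivative, coeff_C_mul]
    cases n with
    | zero =>
      rw [show (0+1+1 : ℕ) = 1+1 from rfl, hcf 1,
        coeff_zero_eq_constantCoeff_apply, hf0]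
      norm_num
    | succ m =>
      rw [show (m+1+1+1 : ℕ) = (m+2)+1 from rfl, hcf (m+2), hcf m]
      have hpar : Even (m+2) ↔ Even m := by
        constructor
        · intro h; rcases h with ⟨t, ht⟩; exact ⟨t-1, by omega⟩
        · intro h; rcases h with ⟨t, ht⟩; exact ⟨t+1, by omega⟩
      by_cases hm : Even m
      · rw [if_pos (hpar.2 hm), if_pos hm,
          show (m+2+1 : ℕ) = (m+2)+1 from rfl, Nat.factorial_succ (m+2),
          show (m+2 : ℕ) = (m+1)+1 from rfl, Nat.factorial_succ (m+1)]
        have h1 : ((Nat.factorial (m+1) : ℚ)) ≠ 0 := Nat.cast_ne_zero.2 (Nat.factorial_ne_zero _)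
        push_cast
        field_simp
        ring
      · rw [if_neg (fun h => hm (hpar.1 h)), if_neg hm]
        ring
  have hcc_d : ∀ F : PowerSeries ℚ, constantCoeff (d⁄dX ℚ F) = coeff 1 F := by
    intro F
    rw [← coeff_zero_eq_constantCoeff_apply, coeff_derivative]
    norm_num
  have hdf0 : constantCoeff (d⁄dX ℚ f) = 1 := by
    rw [hcc_d]; simpa using hcf 0
  have hsq : (d⁄dX ℚ f)^2 = 1 + C (1/4) * f^2 := by
    apply derivative.ext
    · have eL : d⁄dX ℚ ((d⁄dX ℚ f)^2) = C (1/4) * (2 * f * d⁄dX ℚ f) := by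
        rw [pow_two, Derivation.leibniz]
        simp only [smul_eq_mul]
        rw [hf'']
        ring
      have eR : d⁄dX ℚ (1 + C (1/4) * f^2) = C (1/4) * (2 * f * d⁄dX ℚ f) := by
        rw [map_add, Derivation.map_one_eq_zero, Derivation.leibniz, pow_two,
          Derivation.leibniz, derivative_C]
        simp only [smul_eq_mul, smul_zero, mul_zero, zero_add, add_zero]
        ring
      rw [eL, eR]
    · rw [map_pow, hdf0, map_add, map_one, map_mul, constantCoeff_C, map_pow, hf0]
      norm_num
  have hdP : X * d⁄dX ℚ P = P - P^2 * d⁄dX ℚ f := by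
    have h1 : d⁄dX ℚ P = -P^2 * d⁄dX ℚ Q := by
      rw [hPdef]; exact derivative_inv' Q
    have h2 : d⁄dX ℚ f = X * d⁄dX ℚ Q + Q := by
      rw [hfdef, Derivation.leibniz, smul_eq_mul, smul_eq_mul, derivative_X, mul_one]
    rw [h1, h2]
    linear_combination P * hQP
  have hdPpow : ∀ k : ℕ, X * d⁄dX ℚ (P ^ (k+1))
      = C ((k+1 : ℕ) : ℚ) * (P^(k+1) - P^(k+2) * d⁄dX ℚ f) := by
    intro k
    rw [Derivation.leibniz_pow, Nat.add_sub_cancel]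
    simp only [smul_eq_mul, nsmul_eq_mul]
    rw [← map_natCast (C (R := ℚ)) (k+1)]
    linear_combination C ((k+1 : ℕ) : ℚ) * P^k * hdP
  have hE' : ∀ k : ℕ, X * d⁄dX ℚ (P^(k+1) * d⁄dX ℚ f)
      = C ((k+1 : ℕ) : ℚ) * (P^(k+1) * d⁄dX ℚ f)
        - C ((k+1 : ℕ) : ℚ) * (P^(k+2) * (d⁄dX ℚ f)^2)
        + C (1/4) * (X * (X * P^k)) := by
    intro k
    have h1 : d⁄dX ℚ (P^(k+1) * d⁄dX ℚ f)
        = P^(k+1) * (C (1/4) * f) + d⁄dX ℚ f * d⁄dX ℚ (P^(k+1)) := by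
      rw [Derivation.leibniz, smul_eq_mul, smul_eq_mul, hf'']
    rw [h1, mul_add]
    linear_combination (d⁄dX ℚ f) * hdPpow k + (C (1/4) * X * P^k) * hPf
  have hI : ∀ k : ℕ, P^(k+3) * (d⁄dX ℚ f)^2
      = P^(k+3) + C (1/4) * (X * (X * P^(k+1))) := by
    intro k
    rw [hsq]
    linear_combination (C (1/4) * P^(k+1) * (P*f + X)) * hPf
  -- G side
  have hGne : (2 : PowerSeries ℚ) * G ≠ 0 := by
    intro h
    have h2 := congrArg (constantCoeff) h
    rw [map_mul, hG0, mul_one, map_zero, map_ofNat] at h2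
    norm_num at h2
  have hGd : (d⁄dX ℚ G) * (1 + X^2) = -(X * G) := by
    have h0 : d⁄dX ℚ (G^2 * (1 + X^2)) = 0 := by
      rw [hG]; exact Derivation.map_one_eq_zero _
    have h1 : d⁄dX ℚ (G^2 * (1+X^2))
        = 2 * G * ((d⁄dX ℚ G)*(1+X^2) + X*G) := by
      rw [Derivation.leibniz, map_add, Derivation.map_one_eq_zero, pow_two (X : PowerSeries ℚ),
        Derivation.leibniz, pow_two G, Derivation.leibniz]
      simp only [smul_eq_mul, derivative_X, mul_one, zero_add]
      ring
    have h2 : (2*G) * ((d⁄dX ℚ G)*(1+X^2) + X*G) = 0 := by rw [← h1, h0]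
    rcases mul_eq_zero.mp h2 with h | h
    · exact absurd h hGne
    · linear_combination h
  have hXdc : ∀ (F : PowerSeries ℚ) (n : ℕ),
      coeff n (X * d⁄dX ℚ F) = (n : ℚ) * coeff n F := by
    intro F n
    cases n with
    | zero =>
      simp [coeff_zero_eq_constantCoeff_apply]
    | succ m =>
      rw [coeff_succ_X_mul, coeff_derivative]
      push_cast; ring
  have hg1 : coeff 1 G = 0 := by
    have h := congrArg (constantCoeff) hGd
    rw [map_mul, map_add, map_one, map_pow, constantCoeff_X, map_neg, map_mul,
      constantCoeff_X, hcc_d] at h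
    norm_num at h
    exact h
  have hgrec : ∀ n : ℕ, ((n:ℚ)+2) * coeff (n+2) G = -(((n:ℚ)+1)) * coeff n G := by
    intro n
    have h := congrArg (coeff (n+1)) hGd
    rw [mul_add, mul_one, map_add] at h
    have e1 : coeff (n+1) (d⁄dX ℚ G) = coeff (n+2) G * ((n:ℚ)+2) := by
      rw [coeff_derivative]; push_cast; ring
    have e2 : d⁄dX ℚ G * X^2 = X * (X * d⁄dX ℚ G) := by ring
    rw [e1, e2, coeff_succ_X_mul, hXdc G n, map_neg, coeff_succ_X_mul] at h
    linear_combination h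
  -- base cases
  have hp1 : coeff 1 P = 0 := by
    rw [← hcc_d]
    have h1 : d⁄dX ℚ P = -P^2 * d⁄dX ℚ Q := by
      rw [hPdef]; exact derivative_inv' Q
    have hdQ0 : constantCoeff (d⁄dX ℚ Q) = 0 := by
      rw [hcc_d]; simpa using hQc 1
    rw [h1, map_mul, hdQ0, mul_zero]
  have hb1 : coeff 1 (P^2) = 0 := by
    rw [← hcc_d, pow_two, Derivation.leibniz]
    simp only [smul_eq_mul]
    rw [map_add, map_mul, hcc_d, hp1]
    ring
  -- main induction
  intro q
  induction q using Nat.strong_induction_on with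
  | _ q ih =>
    match q, ih with
    | 0, _ =>
      show coeff 0 (P^1) = (1/2 : ℚ)^0 * coeff 0 G
      rw [pow_one, coeff_zero_eq_constantCoeff_apply, hPdef, constantCoeff_inv, hQ0,
        coeff_zero_eq_constantCoeff_apply, hG0]
      norm_num
    | 1, _ =>
      show coeff 1 (P^2) = (1/2 : ℚ)^1 * coeff 1 G
      rw [hb1, hg1]; norm_num
    | (k+2), ih =>
      have ihk : coeff k (P^(k+1)) = (1/2 : ℚ)^k * coeff k G := ih k (by omega)
      have hBc : coeff (k+2) (P^(k+3) * (d⁄dX ℚ f)^2)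
          = coeff (k+2) (P^(k+3)) + (1/4 : ℚ) * coeff k (P^(k+1)) := by
        have h := congrArg (coeff (k+2)) (hI k)
        rw [map_add, coeff_C_mul, coeff_succ_X_mul, coeff_succ_X_mul] at h
        exact h
      have hA : ((k:ℚ)+2) * coeff (k+2) (P^(k+3) * (d⁄dX ℚ f)^2)
          = (1/4 : ℚ) * coeff k (P^(k+1)) := by
        have h := congrArg (coeff (k+2)) (hE' (k+1))
        rw [coeff_succ_X_mul, coeff_derivative, map_add, map_sub, coeff_C_mul, coeff_C_mul,
          coeff_C_mul, coeff_succ_X_mul, coeff_succ_X_mul] at h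
        push_cast at h
        linear_combination h
      have hk2 : ((k:ℚ)+2) ≠ 0 := by positivity
      show coeff (k+2) (P^(k+3)) = (1/2 : ℚ)^(k+2) * coeff (k+2) G
      apply mul_left_cancel₀ hk2
      linear_combination hA - ((k:ℚ)+2) * hBc - (1/2 : ℚ)^(k+2) * hgrec k
        - (((k:ℚ)+1)/4) * ihk
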